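/- Let E be a rank-r vector bundle (finite free module of rank r) over a commutative ring R and M an invertible R-module with an isomorphism E ⊗ M ≅ E. Then taking determinants gives det(E) ⊗ M^⊗r ≅ det(E), and hence M^⊗r ≅ R. -/

import Mathlib

open scoped TensorProduct

section LemmaA

variable {R : Type*} [CommRing R] {T T' : Type*}
  [AddCommGroup T] [Module R T] [AddCommGroup T'] [Module R T']

/-- Every endomorphism of an invertible module is multiplication by a scalar. -/
theorem endo_eq_smul_of_invertible (e : (T ⊗[R] T') ≃ₗ[R] R) (φ : T →ₗ[R] T) :
    ∃ c : R, ∀ x : T, φ x = c • x := by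
  classical
  set c : R := e (φ.rTensor T' (e.symm 1)) with hc
  -- rTensor φ = c • id on T ⊗ T'
  have key : ∀ u : T ⊗[R] T', φ.rTensor T' u = c • u := by
    intro u
    have h1 : ∀ a : R, e (φ.rTensor T' (e.symm a)) = a * c := by
      intro a
      have : (e.toLinearMap ∘ₗ (φ.rTensor T') ∘ₗ e.symm.toLinearMap) a
          = a • ((e.toLinearMap ∘ₗ (φ.rTensor T') ∘ₗ e.symm.toLinearMap) 1) := by
        rw [← map_smul]; simp
      simpa [mul_comm, smul_eq_mul, hc] using this
    have := h1 (e u)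
    rw [e.symm_apply_apply] at this
    apply e.injective
    rw [this, map_smul, smul_eq_mul, mul_comm]
  -- pointwise in T ⊗ T'
  have key2 : ∀ (x : T) (n : T'), (φ x) ⊗ₜ[R] n = c • (x ⊗ₜ[R] n) := by
    intro x n
    simpa using key (x ⊗ₜ n)
  -- pointwise in T' ⊗ T
  have key3 : ∀ (x : T) (n : T'), n ⊗ₜ[R] (φ x) = c • (n ⊗ₜ[R] x) := by
    intro x n
    have := congrArg (TensorProduct.comm R T T') (key2 x n)
    simpa using this
  refine ⟨c, fun y => ?_⟩
  -- contraction map G' : (T ⊗ T') ⊗ T → T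
  set G : (T ⊗[R] T') ⊗[R] T →ₗ[R] T :=
    (TensorProduct.lid R T).toLinearMap ∘ₗ (e.toLinearMap.rTensor T) with hG
  have hGtmul : ∀ (z : T ⊗[R] T') (y : T), G (z ⊗ₜ y) = e z • y := by
    intro z y
    simp [hG, TensorProduct.lid_tmul]
  -- H = id ⊗ φ equals c • id on elements z ⊗ y
  have hH : ∀ (z : T ⊗[R] T') (y : T), z ⊗ₜ[R] (φ y) = c • (z ⊗ₜ[R] y) := by
    intro z y
    induction z using TensorProduct.induction_on with
    | zero => simp
    | tmul x n =>
        apply (TensorProduct.assoc R T T' T).injective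
        simp only [TensorProduct.assoc_tmul, map_smul]
        rw [key3 y n]
        simp [TensorProduct.tmul_smul]
    | add z₁ z₂ h₁ h₂ =>
        simp only [TensorProduct.add_tmul, h₁, h₂, smul_add]
  have h4 : G ((e.symm 1) ⊗ₜ y) = y := by
    rw [hGtmul]; simp
  calc φ y = G ((e.symm 1) ⊗ₜ (φ y)) := by rw [hGtmul]; simp
    _ = G (c • ((e.symm 1) ⊗ₜ y)) := by rw [hH]
    _ = c • y := by rw [map_smul, h4]

/-- An invertible module with a map hitting `1` in `R` is trivial. -/
theorem equiv_of_invertible_of_section (e : (T ⊗[R] T') ≃ₗ[R] R)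
    (D : T →ₗ[R] R) (t₀ : T) (ht₀ : D t₀ = 1) : Nonempty (T ≃ₗ[R] R) := by
  set s : R →ₗ[R] T := LinearMap.toSpanSingleton R T t₀ with hs
  have hDs : ∀ a : R, D (s a) = a := by
    intro a; simp [hs, LinearMap.toSpanSingleton_apply, ht₀]
  obtain ⟨c, hc⟩ := endo_eq_smul_of_invertible e (s ∘ₗ D)
  have hc1 : c = 1 := by
    have := congrArg D (hc t₀)
    simp only [LinearMap.comp_apply, hDs, map_smul, ht₀, smul_eq_mul, mul_one] at this
    simpa [ht₀] using this.symm
  refine ⟨LinearEquiv.ofLinear D s ?_ ?_⟩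
  · apply LinearMap.ext_ring; simpa using hDs 1
  · ext x
    have := hc x
    rw [hc1, one_smul] at this
    simpa using this
end LemmaA

section DetAux

variable {S : Type*} [CommRing S] {W : Type*} [AddCommGroup W] [Module S W]

/-- The determinant multilinear map attached to an isomorphism `(Fin r → W) ≃ (Fin r → S)`. -/
noncomputable def detAux (r : ℕ) (ψ : (Fin r → W) ≃ₗ[S] (Fin r → S)) :
    MultilinearMap S (fun _ : Fin r => W) S :=
  (Matrix.detRowAlternating : (Fin r → S) [⋀^Fin r]→ₗ[S] S).toMultilinearMap.compLinearMap
    (fun j => (ψ : (Fin r → W) →ₗ[S] (Fin r → S)) ∘ₗ LinearMap.single S (fun _ => W) j)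

lemma detAux_apply (r : ℕ) (ψ : (Fin r → W) ≃ₗ[S] (Fin r → S)) (x : Fin r → W) :
    detAux r ψ x = Matrix.det (Matrix.of fun j i => ψ (Pi.single j (x j)) i) := by
  rfl

end DetAux

section Power

variable {R : Type*} [CommRing R] {M M' : Type*}
  [AddCommGroup M] [Module R M] [AddCommGroup M'] [Module R M']

/-- `⨂^(n+1) N ≃ N ⊗ ⨂^n N`. -/
noncomputable def splitEquiv (N : Type*) [AddCommGroup N] [Module R N] (n : ℕ) :
    (⨂[R]^(n+1) N) ≃ₗ[R] N ⊗[R] (⨂[R]^n N) :=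
  (PiTensorProduct.reindex R (fun _ : Fin (n+1) => N) (finCongr (Nat.add_comm n 1) |>.trans
      finSumFinEquiv.symm)) ≪≫ₗ
    (PiTensorProduct.tmulEquiv R N).symm ≪≫ₗ
    TensorProduct.congr (PiTensorProduct.subsingletonEquiv (0 : Fin 1)) (LinearEquiv.refl _ _)

/-- Tensor powers of an invertible module are invertible. -/
noncomputable def powerInv (e : (M ⊗[R] M') ≃ₗ[R] R) :
    ∀ n : ℕ, ((⨂[R]^n M) ⊗[R] (⨂[R]^n M')) ≃ₗ[R] R
  | 0 =>
      TensorProduct.congr (PiTensorProduct.isEmptyEquiv (Fin 0)) (PiTensorProduct.isEmptyEquiv (Fin 0))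
        ≪≫ₗ TensorProduct.lid R R
  | (n+1) => by
      refine TensorProduct.congr (splitEquiv M n) (splitEquiv M' n) ≪≫ₗ
        TensorProduct.tensorTensorTensorComm R M (⨂[R]^n M) M' (⨂[R]^n M') ≪≫ₗ
        TensorProduct.congr e (powerInv e n) ≪≫ₗ TensorProduct.lid R R

end Power
section Local

variable {R : Type*} [CommRing R] {M M' : Type*}
  [AddCommGroup M] [Module R M] [AddCommGroup M'] [Module R M']

lemma exists_smul_eq_one_tmul (P : Ideal R) [P.IsPrime]
    (z : (Localization.AtPrime P) ⊗[R] M) :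
    ∃ (s : P.primeCompl) (m : M), (s : R) • z = (1 : Localization.AtPrime P) ⊗ₜ[R] m := by
  induction z using TensorProduct.induction_on with
  | zero => exact ⟨1, 0, by simp⟩
  | tmul a m =>
      obtain ⟨⟨x, s⟩, hx⟩ := IsLocalization.surj (M := P.primeCompl) a
      refine ⟨s, x • m, ?_⟩
      have h1 : (s : R) • a = algebraMap R (Localization.AtPrime P) x := by
        rw [Algebra.smul_def, mul_comm]; exact hx
      rw [TensorProduct.smul_tmul', h1, Algebra.algebraMap_eq_smul_one,
        TensorProduct.smul_tmul]
  | add z1 z2 h1 h2 =>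
      obtain ⟨s1, m1, hm1⟩ := h1
      obtain ⟨s2, m2, hm2⟩ := h2
      refine ⟨s1 * s2, (s2 : R) • m1 + (s1 : R) • m2, ?_⟩
      have expand : ((s1 * s2 : P.primeCompl) : R) • (z1 + z2)
          = (s2 : R) • ((s1 : R) • z1) + (s1 : R) • ((s2 : R) • z2) := by
        rw [Submonoid.coe_mul, smul_add, mul_smul, mul_smul, smul_comm ((s1:R)) ((s2:R)) z1]
      rw [expand, hm1, hm2, TensorProduct.tmul_add, TensorProduct.tmul_smul,
        TensorProduct.tmul_smul]

set_option maxHeartbeats 2000000 in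
theorem det_span_top (r : ℕ) (hr : 1 ≤ r)
    (e : (M ⊗[R] M') ≃ₗ[R] R)
    (ψ : (Fin r → M) ≃ₗ[R] (Fin r → R)) :
    Ideal.span (Set.range (fun x : Fin r → M => detAux r ψ x)) = ⊤ := by
  classical
  by_contra hne
  obtain ⟨P, hPmax, hJP⟩ := Ideal.exists_le_maximal _ hne
  haveI := hPmax.isPrime
  set A := Localization.AtPrime P with hA
  -- base changed modules
  set W := A ⊗[R] M with hW
  set W' := A ⊗[R] M' with hW'
  -- base changed equivalence
  set ψA : (Fin r → W) ≃ₗ[A] (Fin r → A) :=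
    (TensorProduct.piRight R A A (fun _ : Fin r => M)).symm ≪≫ₗ
      LinearEquiv.baseChange R A _ _ ψ ≪≫ₗ TensorProduct.piScalarRight R A A (Fin r) with hψA
  have entry : ∀ (j : Fin r) (m : M),
      ψA (Pi.single j ((1:A) ⊗ₜ[R] m)) = fun i => algebraMap R A (ψ (Pi.single j m) i) := by
    intro j m
    rw [hψA]
    simp only [LinearEquiv.trans_apply, TensorProduct.piRight_symm_single,
      LinearEquiv.baseChange, TensorProduct.AlgebraTensorModule.congr_tmul,
      LinearEquiv.refl_apply, TensorProduct.piScalarRight_apply,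
      TensorProduct.piScalarRightHom_tmul]
    funext i
    rw [Algebra.algebraMap_eq_smul_one]
  -- determinant compatible with base change
  have compat : ∀ x : Fin r → M,
      detAux r ψA (fun j => (1:A) ⊗ₜ[R] (x j)) = algebraMap R A (detAux r ψ x) := by
    intro x
    rw [detAux_apply, detAux_apply, RingHom.map_det]
    congr 1
    ext j i
    rw [RingHom.mapMatrix_apply, Matrix.map_apply, Matrix.of_apply, Matrix.of_apply, entry]
  -- W is a direct summand of (Fin r → A)
  set i0 : Fin r := ⟨0, hr⟩ with hi0
  set inc : M →ₗ[R] (Fin r → R) := ψ.toLinearMap ∘ₗ LinearMap.single R (fun _ => M) i0 with hinc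
  set prj : (Fin r → R) →ₗ[R] M := (LinearMap.proj i0) ∘ₗ ψ.symm.toLinearMap with hprj
  have hpi : prj ∘ₗ inc = LinearMap.id := by
    ext m; simp [hinc, hprj]
  set pEq := TensorProduct.piScalarRight R A A (Fin r) with hpEq
  set incA : W →ₗ[A] (Fin r → A) := pEq.toLinearMap ∘ₗ inc.baseChange A with hincA
  set prjA : (Fin r → A) →ₗ[A] W := prj.baseChange A ∘ₗ pEq.symm.toLinearMap with hprjA
  have hpiA : ∀ w : W, prjA (incA w) = w := by
    intro w
    simp only [hincA, hprjA, LinearMap.comp_apply, LinearEquiv.coe_coe,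
      LinearEquiv.symm_apply_apply]
    rw [← LinearMap.comp_apply, ← LinearMap.baseChange_comp, hpi, LinearMap.baseChange_id,
      LinearMap.id_apply]
  haveI : Module.Projective A W := Module.Projective.of_split incA prjA (LinearMap.ext hpiA)
  haveI : Module.Finite A W := Module.Finite.of_surjective prjA (fun w => ⟨incA w, hpiA w⟩)
  haveI : Module.FinitePresentation A W := Module.finitePresentation_of_projective A W
  haveI : Module.Free A W := Module.free_of_flat_of_isLocalRing
  -- invertibility of W over A
  set eA : (W ⊗[A] W') ≃ₗ[A] A :=
    (TensorProduct.AlgebraTensorModule.cancelBaseChange R A A W M') ≪≫ₗ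
      (TensorProduct.AlgebraTensorModule.assoc R R A A M M') ≪≫ₗ
      LinearEquiv.baseChange R A _ _ e ≪≫ₗ
      TensorProduct.AlgebraTensorModule.rid R A A with heA
  set b := Module.Free.chooseBasis A W with hb
  set ι := Module.Free.ChooseBasisIndex A W with hι
  set equivA : A ≃ₗ[A] (ι → W') :=
    eA.symm ≪≫ₗ TensorProduct.congr b.equivFun (LinearEquiv.refl A W') ≪≫ₗ
      TensorProduct.comm A _ _ ≪≫ₗ TensorProduct.piScalarRight A A W' ι with hequivA
  haveI hne : Nonempty ι := by
    by_contra h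
    haveI : IsEmpty ι := not_nonempty_iff.mp h
    haveI : Subsingleton (ι → W') := ⟨fun f g => funext (fun i => isEmptyElim i)⟩
    haveI : Subsingleton A := equivA.toEquiv.subsingleton
    exact false_of_nontrivial_of_subsingleton A
  have i1 : ι := Classical.arbitrary ι
  -- W' is a direct summand of A
  set incA' : W' →ₗ[A] A := equivA.symm.toLinearMap ∘ₗ LinearMap.single A (fun _ => W') i1
    with hincA'
  set prjA' : A →ₗ[A] W' := (LinearMap.proj i1) ∘ₗ equivA.toLinearMap with hprjA'
  have hpiA' : ∀ w : W', prjA' (incA' w) = w := by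
    intro w
    simp [hincA', hprjA']
  haveI : Module.Projective A W' := Module.Projective.of_split incA' prjA' (LinearMap.ext hpiA')
  haveI : Module.Finite A W' := Module.Finite.of_surjective prjA' (fun w => ⟨incA' w, hpiA' w⟩)
  haveI : Module.FinitePresentation A W' := Module.finitePresentation_of_projective A W'
  haveI : Module.Free A W' := Module.free_of_flat_of_isLocalRing
  set b' := Module.Free.chooseBasis A W' with hb'
  set κ := Module.Free.ChooseBasisIndex A W' with hκ
  -- counting ranks
  set bigEquiv : A ≃ₗ[A] (ι × κ → A) :=
    equivA ≪≫ₗ (LinearEquiv.piCongrRight fun _ : ι => b'.equivFun) ≪≫ₗ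
      (LinearEquiv.curry A A ι κ).symm with hbigEquiv
  have hcard : Fintype.card ι * Fintype.card κ = 1 := by
    have h1 := bigEquiv.finrank_eq
    rw [Module.finrank_self, Module.finrank_pi, Fintype.card_prod] at h1
    exact h1.symm
  haveI : Unique ι :=
    (Fintype.equivFinOfCardEq (Nat.eq_one_of_mul_eq_one_right hcard)).unique
  set eqM : W ≃ₗ[A] A := b.equivFun ≪≫ₗ LinearEquiv.funUnique ι A A with heqM
  set u : W := eqM.symm 1 with hu0
  -- the determinant of the matrix of ψA in the basis u is a unit
  set Θ : (Fin r → A) ≃ₗ[A] (Fin r → A) :=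
    (LinearEquiv.piCongrRight fun _ : Fin r => eqM.symm) ≪≫ₗ ψA with hΘ
  have hdet1 : IsUnit (LinearMap.toMatrix' Θ.toLinearMap).det := by
    have h2 : Θ.toLinearMap ∘ₗ Θ.symm.toLinearMap = LinearMap.id :=
      LinearMap.ext fun v => Θ.apply_symm_apply v
    apply IsUnit.of_mul_eq_one ((LinearMap.toMatrix' Θ.symm.toLinearMap).det)
    rw [← Matrix.det_mul, ← LinearMap.toMatrix'_comp, h2, LinearMap.toMatrix'_id,
      Matrix.det_one]
  have hrel : (LinearMap.toMatrix' Θ.toLinearMap).det = detAux r ψA (fun _ => u) := by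
    rw [detAux_apply, ← Matrix.det_transpose]
    congr 1
    ext i j
    rw [Matrix.transpose_apply, Matrix.of_apply, LinearMap.toMatrix'_apply]
    have h3 : (fun j' => if j' = i then (1:A) else 0) = Pi.single i (1:A) := by
      funext k; simp [Pi.single_apply]
    have h4 : (fun k => eqM.symm ((Pi.single i (1:A) : Fin r → A) k)) = Pi.single i u := by
      funext k
      rcases eq_or_ne k i with hk | hk
      · subst hk; simp [hu0]
      · simp [Pi.single_eq_of_ne hk]
    have h5 : (LinearEquiv.piCongrRight fun _ : Fin r => eqM.symm) (Pi.single i (1:A))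
        = Pi.single i u := by
      rw [← h4]; rfl
    have h6 : Θ (Pi.single i (1:A)) = ψA (Pi.single i u) := by
      rw [hΘ]
      simp only [LinearEquiv.trans_apply]
      rw [h5]
    exact congrFun h6 j
  -- final contradiction
  obtain ⟨s, m, hsm⟩ := exists_smul_eq_one_tmul P u
  have hsmul : (fun _ : Fin r => (algebraMap R A (s:R)) • u) = (fun _ : Fin r => (1:A) ⊗ₜ[R] m) := by
    funext _; rw [algebraMap_smul, hsm]
  have key := compat (fun _ => m)
  rw [← hsmul, MultilinearMap.map_smul_univ] at key
  have hunit : IsUnit ((∏ _i : Fin r, algebraMap R A (s:R)) • detAux r ψA (fun _ => u)) := by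
    rw [smul_eq_mul, Finset.prod_const, Finset.card_univ, Fintype.card_fin]
    exact ((IsLocalization.map_units A s).pow r).mul (hrel ▸ hdet1)
  have hmem : detAux r ψ (fun _ => m) ∈ P := hJP (Ideal.subset_span ⟨fun _ => m, rfl⟩)
  have hmax : algebraMap R A (detAux r ψ (fun _ => m)) ∈ IsLocalRing.maximalIdeal A :=
    (IsLocalization.AtPrime.to_map_mem_maximal_iff A P _).mpr hmem
  rw [← key] at hmax
  exact (mem_nonunits_iff.mp ((IsLocalRing.mem_maximalIdeal _).mp hmax)) hunit

end Local

set_option maxHeartbeats 1000000 in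
/-- If `E` is a finite free module of rank `r ≥ 1` over a commutative ring `R` and `M` is an
invertible `R`-module with `E ⊗ M ≅ E`, then `M^⊗r ≅ R`: the determinant argument shows the
class of `M` in `Pic(R)` is killed by `r`. -/
theorem tensor_power_trivial_of_rank_iso
    {R : Type*} [CommRing R] [Nontrivial R]
    {E M M' : Type*} [AddCommGroup E] [Module R E]
    [AddCommGroup M] [Module R M] [AddCommGroup M'] [Module R M']
    (r : ℕ) (hr : 1 ≤ r) (hE : Nonempty (E ≃ₗ[R] (Fin r → R)))
    (hinv : Nonempty ((M ⊗[R] M') ≃ₗ[R] R))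
    (hiso : Nonempty ((E ⊗[R] M) ≃ₗ[R] E)) :
    Nonempty ((⨂[R]^r M) ≃ₗ[R] R) := by
  classical
  obtain ⟨eE⟩ := hE
  obtain ⟨e⟩ := hinv
  obtain ⟨eEM⟩ := hiso
  set ψ : (Fin r → M) ≃ₗ[R] (Fin r → R) :=
    (TensorProduct.piScalarRight R R M (Fin r)).symm ≪≫ₗ
      TensorProduct.comm R M (Fin r → R) ≪≫ₗ
      TensorProduct.congr eE.symm (LinearEquiv.refl R M) ≪≫ₗ eEM ≪≫ₗ eE with hψ
  have hspan := det_span_top r hr e ψ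
  set D : (⨂[R]^r M) →ₗ[R] R := PiTensorProduct.lift (detAux r ψ) with hD
  have hsub : Ideal.span (Set.range fun x : Fin r → M => detAux r ψ x)
      ≤ LinearMap.range D := by
    rw [Ideal.span_le]
    rintro _ ⟨x, rfl⟩
    exact ⟨PiTensorProduct.tprod R x, by simp [hD]⟩
  have hone : (1 : R) ∈ Ideal.span (Set.range fun x : Fin r → M => detAux r ψ x) := by
    rw [hspan]; trivial
  obtain ⟨t₀, ht₀⟩ := hsub hone
  exact equiv_of_invertible_of_section (powerInv e r) D t₀ ht₀
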